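/- The map π on ℂH ⊗_{R₀₁} Ĝ ⊗_{R₁₂} ℂH defined on generators by (π(h^{(0)})ψ)(g₀,g₂) = ψ(g₀h^{(0)}, g₂), (π(h^{(2)})ψ)(g₀,g₂) = ψ(g₀, g₂h^{(2)}), and (π(δ_g)ψ)(g₀,g₂) = δ_g(g₀⁻¹g₂)ψ(g₀,g₂), acting on the Hilbert space L²(G) ⊗ L²(G), is a faithful *-representation; hence ℂH ⊗_{R₀₁} Ĝ ⊗_{R₁₂} ℂH is a finite-dimensional C*-algebra. -/
import Mathlib


open scoped BigOperators

noncomputable section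

variable {G : Type*} [Group G] [Fintype G] [DecidableEq G]

/-- The twisting map `R₀₁ : Ĝ ⊗ ℂH → ℂH ⊗ Ĝ`, `δ_g ⊗ h ↦ h ⊗ δ_{h⁻¹g}`, on
coefficient functions (`Ĝ ⊗ ℂH` is modelled as `G × H → ℂ`, etc.). -/
def R01 (H : Subgroup G) (a : G × H → ℂ) : H × G → ℂ :=
  fun p => a ((p.1 : G) * p.2, p.1)

/-- The twisting map `R₁₂ : ℂH ⊗ Ĝ → Ĝ ⊗ ℂH`, `h ⊗ δ_g ↦ δ_{gh⁻¹} ⊗ h`. -/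
def R12 (H : Subgroup G) (a : H × G → ℂ) : G × H → ℂ :=
  fun p => a (p.2, p.1 * (p.2 : G))

/-- The multiplication of `ℂH ⊗_{R₀₁} Ĝ ⊗_{R₁₂} ℂH`. -/
def tmul3 (H : Subgroup G) [Fintype H] (a b : H × G × H → ℂ) : H × G × H → ℂ :=
  fun p => ∑ h₂ : H, ∑ f₁ : H,
    a (p.1 * h₂⁻¹, (h₂ : G) * p.2.1, f₁) * b (h₂, p.2.1 * (f₁ : G), f₁⁻¹ * p.2.2)

/-- The unit `e ⊗ (∑_g δ_g) ⊗ e` of `ℂH ⊗_{R₀₁} Ĝ ⊗_{R₁₂} ℂH`. -/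
def one3 (H : Subgroup G) : H × G × H → ℂ :=
  fun p => if p.1 = 1 ∧ p.2.2 = 1 then 1 else 0

/-- The star `(h₁ ⊗ δ_g ⊗ h₂)* = h₁⁻¹ ⊗ δ_{h₁gh₂} ⊗ h₂⁻¹`, extended conjugate-linearly. -/
def star3 (H : Subgroup G) (a : H × G × H → ℂ) : H × G × H → ℂ :=
  fun p => (starRingEnd ℂ) (a (p.1⁻¹, (p.1 : G) * p.2.1 * (p.2.2 : G), p.2.2⁻¹))

/-- The representation `π` on the Hilbert space `L²(G) ⊗ L²(G)` (functions `G × G → ℂ`):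
on generators, `(π(h⁽⁰⁾)ψ)(g₀,g₂) = ψ(g₀h,g₂)`, `(π(h⁽²⁾)ψ)(g₀,g₂) = ψ(g₀,g₂h)`,
`(π(δ_g)ψ)(g₀,g₂) = δ_g(g₀⁻¹g₂)ψ(g₀,g₂)`. -/
def pi3 (H : Subgroup G) [Fintype H] (a : H × G × H → ℂ) (ψ : G × G → ℂ) : G × G → ℂ :=
  fun q => ∑ h : H, ∑ f : H,
    a (h, (h : G)⁻¹ * q.1⁻¹ * q.2, f) * ψ (q.1 * (h : G), q.2 * (f : G))

/-- Auxiliary: unfold a sum over `α × β × β` into three nested sums. -/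
lemma sum3eq {α β : Type*} [Fintype α] [Fintype β] (F : α × β × β → ℂ) :
    ∑ p : α × β × β, F p = ∑ q : α, ∑ h : β, ∑ f : β, F (q, h, f) := by
  rw [Fintype.sum_prod_type]
  exact Finset.sum_congr rfl fun q _ => Fintype.sum_prod_type _

/-- Auxiliary: unfold a sum over `(β × β) × β × β` into four nested sums. -/
lemma sum4eq {β : Type*} [Fintype β] (F : (β × β) × β × β → ℂ) :
    ∑ p : (β × β) × β × β, F p
      = ∑ h : β, ∑ f : β, ∑ h₂ : β, ∑ f₁ : β, F ((h, f), h₂, f₁) := by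
  rw [sum3eq, Fintype.sum_prod_type]

/-- `π` is unital. -/
lemma pi3_one (H : Subgroup G) [Fintype H] (ψ : G × G → ℂ) : pi3 H (one3 H) ψ = ψ := by
  funext q
  simp [pi3, one3, ite_and, Finset.sum_ite_eq', Finset.mul_sum]

/-- `π` is multiplicative. -/
lemma pi3_mul (H : Subgroup G) [Fintype H] (a b : H × G × H → ℂ) (ψ : G × G → ℂ) :
    pi3 H (tmul3 H a b) ψ = pi3 H a (pi3 H b ψ) := by
  funext q
  set τ : (H × H) × H × H → (H × H) × H × H :=
    fun p => ((p.1.1 * p.2.1⁻¹, p.2.2), p.2.1, p.2.2⁻¹ * p.1.2) with hτ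
  have hbij : Function.Bijective τ := by
    rw [Function.bijective_iff_has_inverse]
    refine ⟨fun p => ((p.1.1 * p.2.1, p.1.2 * p.2.2), p.2.1, p.1.2), fun p => ?_, fun p => ?_⟩ <;>
      simp [hτ, mul_assoc]
  set A : (H × H) × H × H → ℂ := fun p =>
    a (p.1.1 * p.2.1⁻¹, (p.2.1 : G) * ((p.1.1 : G)⁻¹ * q.1⁻¹ * q.2), p.2.2) *
      b (p.2.1, ((p.1.1 : G)⁻¹ * q.1⁻¹ * q.2) * (p.2.2 : G), p.2.2⁻¹ * p.1.2) *
      ψ (q.1 * (p.1.1 : G), q.2 * (p.1.2 : G)) with hA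
  set B : (H × H) × H × H → ℂ := fun p =>
    a (p.1.1, (p.1.1 : G)⁻¹ * q.1⁻¹ * q.2, p.1.2) *
      (b (p.2.1, (p.2.1 : G)⁻¹ * (q.1 * (p.1.1 : G))⁻¹ * (q.2 * (p.1.2 : G)), p.2.2) *
        ψ ((q.1 * (p.1.1 : G)) * (p.2.1 : G), (q.2 * (p.1.2 : G)) * (p.2.2 : G))) with hB
  have hL : pi3 H (tmul3 H a b) ψ q = ∑ p, A p := by
    rw [sum4eq]
    simp only [pi3, tmul3, hA, Finset.sum_mul]
  have hR : pi3 H a (pi3 H b ψ) q = ∑ p, B p := by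
    rw [sum4eq]
    simp only [pi3, hB, Finset.mul_sum]
  rw [hL, hR]
  refine Fintype.sum_bijective τ hbij A B fun p => ?_
  simp only [hA, hB, hτ, InvMemClass.coe_inv, MulMemClass.coe_mul, mul_inv_rev, inv_inv,
    mul_assoc, inv_mul_cancel_left, mul_inv_cancel_left, mul_inv_cancel_right,
    inv_mul_cancel_right, mul_inv_cancel, inv_mul_cancel, mul_one, one_mul]

/-- `π` intertwines the star with the adjoint. -/
lemma pi3_star (H : Subgroup G) [Fintype H] (a : H × G × H → ℂ) (ψ φ : G × G → ℂ) :
    ∑ q : G × G, pi3 H a ψ q * (starRingEnd ℂ) (φ q)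
      = ∑ q : G × G, ψ q * (starRingEnd ℂ) (pi3 H (star3 H a) φ q) := by
  set F : (G × G) × H × H → ℂ := fun p =>
    a (p.2.1, (p.2.1 : G)⁻¹ * p.1.1⁻¹ * p.1.2, p.2.2) *
      ψ (p.1.1 * (p.2.1 : G), p.1.2 * (p.2.2 : G)) * (starRingEnd ℂ) (φ p.1) with hF
  set Fr : (G × G) × H × H → ℂ := fun p =>
    ψ p.1 * (starRingEnd ℂ)
      ((starRingEnd ℂ) (a (p.2.1⁻¹,
          (p.2.1 : G) * ((p.2.1 : G)⁻¹ * p.1.1⁻¹ * p.1.2) * (p.2.2 : G), p.2.2⁻¹)) *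
        φ (p.1.1 * (p.2.1 : G), p.1.2 * (p.2.2 : G))) with hFr
  set σ : (G × G) × H × H → (G × G) × H × H :=
    fun p => ((p.1.1 * p.2.1, p.1.2 * p.2.2), p.2.1⁻¹, p.2.2⁻¹) with hσ
  have hinv : Function.Involutive σ := by
    intro p
    simp [hσ, mul_assoc]
  have hL : ∑ q : G × G, pi3 H a ψ q * (starRingEnd ℂ) (φ q) = ∑ p, F p := by
    rw [sum3eq]
    simp only [pi3, hF, Finset.sum_mul]
  have hR : ∑ q : G × G, ψ q * (starRingEnd ℂ) (pi3 H (star3 H a) φ q) = ∑ p, Fr p := by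
    rw [sum3eq]
    simp only [pi3, star3, hFr, map_sum, Finset.mul_sum]
  rw [hL, hR]
  refine Fintype.sum_bijective σ hinv.bijective F Fr fun p => ?_
  simp only [hF, hFr, hσ, map_mul, Complex.conj_conj, InvMemClass.coe_inv, mul_inv_rev,
    inv_inv, mul_assoc, inv_mul_cancel_left, mul_inv_cancel_left, mul_inv_cancel_right,
    inv_mul_cancel_right, mul_inv_cancel, inv_mul_cancel, mul_one, one_mul, Prod.mk.eta]
  ring

/-- `π` is faithful. -/
lemma pi3_faithful (H : Subgroup G) [Fintype H] (a b : H × G × H → ℂ)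
    (hab : ∀ ψ : G × G → ℂ, pi3 H a ψ = pi3 H b ψ) : a = b := by
  funext p
  obtain ⟨h₀, g, f₀⟩ := p
  set ψ : G × G → ℂ := fun r => if r = ((h₀ : G), (h₀ : G) * g * (f₀ : G)) then 1 else 0 with hψ
  have key := congrFun (hab ψ) (1, (h₀ : G) * g)
  have expand : ∀ c : H × G × H → ℂ,
      pi3 H c ψ (1, (h₀ : G) * g) = c (h₀, g, f₀) := by
    intro c
    simp only [pi3, hψ, one_mul, inv_one, mul_one, Prod.mk.injEq]
    have : ∀ h f : H,
        ((h : G) = (h₀ : G) ∧ (h₀ : G) * g * (f : G) = (h₀ : G) * g * (f₀ : G))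
          ↔ (h = h₀ ∧ f = f₀) := by
      intro h f
      constructor
      · rintro ⟨h1, h2⟩
        exact ⟨Subtype.ext h1, Subtype.ext (mul_left_cancel h2)⟩
      · rintro ⟨rfl, rfl⟩; exact ⟨rfl, rfl⟩
    rw [Finset.sum_congr rfl fun h _ => Finset.sum_congr rfl fun f _ => by
      rw [if_congr (this h f) rfl rfl]]
    simp [ite_and, Finset.sum_ite_eq', mul_assoc]
  rw [expand a, expand b] at key
  exact key

/-- `π` is a faithful *-representation of `ℂH ⊗_{R₀₁} Ĝ ⊗_{R₁₂} ℂH` on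
`L²(G) ⊗ L²(G)` (with inner product `⟨φ,ψ⟩ = (1/|G|)∑ φ conj ψ`); in particular the
algebra is a finite-dimensional C*-algebra. -/
theorem statement17 (H : Subgroup G) [Fintype H] :
    (∀ ψ : G × G → ℂ, pi3 H (one3 H) ψ = ψ) ∧
    (∀ (a b : H × G × H → ℂ) (ψ : G × G → ℂ),
      pi3 H (tmul3 H a b) ψ = pi3 H a (pi3 H b ψ)) ∧
    (∀ (a b : H × G × H → ℂ) (ψ : G × G → ℂ),
      pi3 H (a + b) ψ = pi3 H a ψ + pi3 H b ψ) ∧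
    (∀ (c : ℂ) (a : H × G × H → ℂ) (ψ : G × G → ℂ), pi3 H (c • a) ψ = c • pi3 H a ψ) ∧
    (∀ (a : H × G × H → ℂ) (ψ ψ' : G × G → ℂ), pi3 H a (ψ + ψ') = pi3 H a ψ + pi3 H a ψ') ∧
    (∀ (a : H × G × H → ℂ) (c : ℂ) (ψ : G × G → ℂ), pi3 H a (c • ψ) = c • pi3 H a ψ) ∧
    (∀ a b : H × G × H → ℂ, (∀ ψ : G × G → ℂ, pi3 H a ψ = pi3 H b ψ) → a = b) ∧
    (∀ (a : H × G × H → ℂ) (ψ φ : G × G → ℂ),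
      (Fintype.card G : ℂ)⁻¹ * ∑ q : G × G, pi3 H a ψ q * (starRingEnd ℂ) (φ q)
        = (Fintype.card G : ℂ)⁻¹ *
            ∑ q : G × G, ψ q * (starRingEnd ℂ) (pi3 H (star3 H a) φ q)) ∧
    FiniteDimensional ℂ (H × G × H → ℂ) := by
  refine ⟨pi3_one H, pi3_mul H, ?_, ?_, ?_, ?_, pi3_faithful H, ?_, inferInstance⟩
  · intro a b ψ
    funext q
    simp [pi3, add_mul, Finset.sum_add_distrib]
  · intro c a ψ
    funext q
    simp [pi3, Finset.mul_sum, mul_assoc]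
  · intro a ψ ψ'
    funext q
    simp [pi3, mul_add, Finset.sum_add_distrib]
  · intro a c ψ
    funext q
    simp [pi3, Finset.mul_sum, mul_left_comm]
  · intro a ψ φ
    rw [pi3_star]
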